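/- arXiv:1904.03664 — 2 statements merged into one kernel-verified Lean document; each statement's English description precedes it below -/
import Mathlib

section
/- Let β ≥ 0. For every t ∈ [0,1/2], F_β(t) − t·log f_β(t) ≤ 0. -/
/-- `f_β(u) = (e^{-2β}(1-2u) + √(1 + (e^{-4β}-1)(1-2u)²)) / (2(1-u))`. -/
noncomputable def fBeta (β u : ℝ) : ℝ :=
  (Real.exp (-2*β) * (1-2*u) + Real.sqrt (1 + (Real.exp (-4*β) - 1) * (1-2*u)^2)) / (2*(1-u))

/-- `F_β(t) = ∫_0^{min(t,1-t)} log f_β(u) du`. -/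
noncomputable def FBeta (β t : ℝ) : ℝ :=
  ∫ u in (0:ℝ)..(min t (1-t)), Real.log (fBeta β u)

lemma exp4_eq (β : ℝ) : Real.exp (-4*β) = Real.exp (-2*β) ^ 2 := by
  rw [sq, ← Real.exp_add]; ring_nf

lemma sqrt_arg_lb (β : ℝ) (hβ : 0 ≤ β) {u : ℝ} (hu0 : 0 ≤ u) (hu : u ≤ 1/2) :
    Real.exp (-2*β) ^ 2 ≤ 1 + (Real.exp (-4*β) - 1) * (1-2*u)^2 := by
  rw [exp4_eq]
  have ha1 : Real.exp (-2*β) ≤ 1 := Real.exp_le_one_iff.mpr (by linarith)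
  have ha0 : 0 < Real.exp (-2*β) := Real.exp_pos _
  have hs : (1-2*u)^2 ≤ 1 := by nlinarith
  have ha2 : Real.exp (-2*β)^2 ≤ 1 := by nlinarith
  nlinarith [mul_nonneg (by linarith : (0:ℝ) ≤ 1 - Real.exp (-2*β)^2)
    (by linarith : (0:ℝ) ≤ 1 - (1-2*u)^2)]

lemma fBeta_pos (β : ℝ) (hβ : 0 ≤ β) {u : ℝ} (hu0 : 0 ≤ u) (hu : u ≤ 1/2) :
    0 < fBeta β u := by
  have ha0 : 0 < Real.exp (-2*β) := Real.exp_pos _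
  have hsq : Real.exp (-2*β) ≤ Real.sqrt (1 + (Real.exp (-4*β) - 1) * (1-2*u)^2) := by
    have := Real.sqrt_le_sqrt (sqrt_arg_lb β hβ hu0 hu)
    rwa [Real.sqrt_sq ha0.le] at this
  apply div_pos
  · have : 0 ≤ Real.exp (-2*β) * (1-2*u) := mul_nonneg ha0.le (by linarith)
    linarith
  · linarith

lemma fBeta_mono (β : ℝ) (hβ : 0 ≤ β) {u t : ℝ} (hu0 : 0 ≤ u) (hut : u ≤ t)
    (ht : t ≤ 1/2) : fBeta β u ≤ fBeta β t := by
  have ha0 : 0 < Real.exp (-2*β) := Real.exp_pos _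
  set a := Real.exp (-2*β) with ha
  set R := Real.sqrt (1 + (Real.exp (-4*β) - 1) * (1-2*u)^2) with hR
  set P := Real.sqrt (1 + (Real.exp (-4*β) - 1) * (1-2*t)^2) with hP
  have haR : a ≤ R := by
    have := Real.sqrt_le_sqrt (sqrt_arg_lb β hβ hu0 (le_trans hut ht))
    rwa [Real.sqrt_sq ha0.le] at this
  have hRP : R ≤ P := by
    apply Real.sqrt_le_sqrt
    have h1 : Real.exp (-4*β) - 1 ≤ 0 := by
      have : Real.exp (-4*β) ≤ 1 := Real.exp_le_one_iff.mpr (by linarith)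
      linarith
    have h2 : (1-2*t)^2 ≤ (1-2*u)^2 := by nlinarith
    nlinarith
  rw [fBeta, fBeta, div_le_div_iff₀ (by linarith) (by linarith)]
  nlinarith [mul_nonneg (sub_nonneg.mpr hRP) (by linarith : (0:ℝ) ≤ 2 - 2*u),
    mul_nonneg (sub_nonneg.mpr haR) (by linarith : (0:ℝ) ≤ 2*(t - u))]

lemma fBeta_contOn (β : ℝ) {t : ℝ} (ht : t ≤ 1/2) :
    ContinuousOn (fun u => fBeta β u) (Set.Icc 0 t) := by
  unfold fBeta
  apply ContinuousOn.div
  · exact (Continuous.continuousOn (by continuity))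
  · exact (Continuous.continuousOn (by continuity))
  · intro x hx
    have := hx.2
    have : x ≤ 1/2 := le_trans this ht
    intro h
    have : (1:ℝ) - x > 0 := by linarith
    linarith [h]

/-- for `β ≥ 0` and `t ∈ [0,1/2]`, `F_β(t) − t·log f_β(t) ≤ 0`. -/
theorem FBeta_sub_mul_log_fBeta_nonpos (β : ℝ) (hβ : 0 ≤ β) :
    ∀ t ∈ Set.Icc (0:ℝ) (1/2), FBeta β t - t * Real.log (fBeta β t) ≤ 0 := by
  rintro t ⟨ht0, ht2⟩
  have hmin : min t (1-t) = t := min_eq_left (by linarith)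
  rw [FBeta, hmin]
  have hcont : ContinuousOn (fun u => Real.log (fBeta β u)) (Set.Icc 0 t) := by
    apply ContinuousOn.log (fBeta_contOn β ht2)
    intro x hx
    exact (fBeta_pos β hβ hx.1 (le_trans hx.2 ht2)).ne'
  have hint : IntervalIntegrable (fun u => Real.log (fBeta β u)) MeasureTheory.volume 0 t := by
    apply ContinuousOn.intervalIntegrable
    rwa [Set.uIcc_of_le ht0]
  have hmono : ∀ x ∈ Set.Icc (0:ℝ) t, Real.log (fBeta β x) ≤ Real.log (fBeta β t) := by
    intro x hx
    exact Real.log_le_log (fBeta_pos β hβ hx.1 (le_trans hx.2 ht2))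
      (fBeta_mono β hβ hx.1 hx.2 ht2)
  have h := intervalIntegral.integral_mono_on ht0 hint
    (intervalIntegrable_const) hmono
  rw [intervalIntegral.integral_const] at h
  simp only [smul_eq_mul, sub_zero] at h
  linarith
end

section
/- Fix β ≥ 0 and B ≥ 0. For all s, t ∈ [0,1]^ℕ, |G_{β,B}(s) − G_{β,B}(t)| ≤ ∑_{k≥1} p_k |I(s_k) − I(t_k)| + (2B + 2β) ∑_{k≥1} k p_k |s_k − t_k|. -/
open Filter Topology

/-- The entropy function `I(t) = -t log t - (1-t) log(1-t)` (with `I(0) = I(1) = 0`,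
using the convention `log 0 = 0`). -/
noncomputable def entI (t : ℝ) : ℝ := -t * Real.log t - (1-t) * Real.log (1-t)

/-- The mean `E[D] = ∑_{k≥1} k p_k` of a degree distribution `p`. -/
noncomputable def meanD (p : ℕ → ℝ) : ℝ := ∑' (k : ℕ), (k : ℝ) * p k

/-- The functional
`G_{β,B}(s) = ∑_k p_k I(s_k) + B(2 ∑_k s_k p_k − 1) + E[D]·F_β((∑_k k p_k s_k)/E[D])`. -/
noncomputable def Gfun (p : ℕ → ℝ) (β B : ℝ) (s : ℕ → ℝ) : ℝ :=
  (∑' k, p k * entI (s k)) + B * (2 * (∑' k, s k * p k) - 1)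
    + meanD p * FBeta β ((∑' (k : ℕ), (k : ℝ) * p k * s k) / meanD p)

/-- The cube `[0,1]^ℕ`. -/
def unitCube : Set (ℕ → ℝ) := {s | ∀ k, s k ∈ Set.Icc (0:ℝ) 1}

lemma neg_mul_log_mem {x : ℝ} (h0 : 0 ≤ x) (h1 : x ≤ 1) :
    0 ≤ -x * Real.log x ∧ -x * Real.log x ≤ 1 := by
  rcases eq_or_lt_of_le h0 with h | h
  · simp [← h]
  · have hlog : Real.log x ≤ 0 := Real.log_nonpos h0 h1
    constructor
    · nlinarith
    · have : Real.log x⁻¹ ≤ x⁻¹ - 1 := Real.log_le_sub_one_of_pos (by positivity)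
      rw [Real.log_inv] at this
      have hx : x * x⁻¹ = 1 := mul_inv_cancel₀ (ne_of_gt h)
      nlinarith
lemma entI_mem {x : ℝ} (h0 : 0 ≤ x) (h1 : x ≤ 1) : 0 ≤ entI x ∧ entI x ≤ 2 := by
  obtain ⟨a1, a2⟩ := neg_mul_log_mem h0 h1
  obtain ⟨b1, b2⟩ := neg_mul_log_mem (by linarith : (0:ℝ) ≤ 1 - x) (by linarith)
  rw [entI]
  constructor <;> nlinarith


lemma fBeta_bounds {β u : ℝ} (hβ : 0 ≤ β) (hu : u ∈ Set.Icc (0:ℝ) (1/2)) :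
    Real.exp (-2*β) ≤ fBeta β u ∧ fBeta β u ≤ 1 := by
  obtain ⟨hu0, hu1⟩ := hu
  set v : ℝ := 1 - 2*u with hv
  have hv0 : 0 ≤ v := by simp [hv]; linarith
  have hv1 : v ≤ 1 := by simp [hv]; linarith
  have hexp1 : Real.exp (-2*β) ≤ 1 := Real.exp_le_one_iff.mpr (by linarith)
  have hexp4 : Real.exp (-4*β) ≤ 1 := Real.exp_le_one_iff.mpr (by linarith)
  have hsq : Real.exp (-4*β) = (Real.exp (-2*β))^2 := by
    rw [← Real.exp_nat_mul]; ring_nf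
  have hargle : 1 + (Real.exp (-4*β) - 1) * v^2 ≤ 1 := by nlinarith
  have hv2 : v^2 ≤ 1 := by nlinarith
  have hargge : Real.exp (-4*β) ≤ 1 + (Real.exp (-4*β) - 1) * v^2 := by
    nlinarith [mul_nonneg (sub_nonneg.mpr hexp4) (sub_nonneg.mpr hv2)]
  have hsqrt_le : Real.sqrt (1 + (Real.exp (-4*β) - 1) * v^2) ≤ 1 := Real.sqrt_le_one.mpr hargle
  have hsqrt_ge : Real.exp (-2*β) ≤ Real.sqrt (1 + (Real.exp (-4*β) - 1) * v^2) := by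
    rw [Real.le_sqrt (Real.exp_pos _).le (by linarith [Real.exp_pos (-4*β)])]
    rw [← hsq]; exact hargge
  have hden : 2*(1-u) = 1 + v := by ring
  have hdenpos : (0:ℝ) < 1 + v := by linarith
  constructor
  · rw [fBeta, hden, le_div_iff₀ hdenpos]
    nlinarith
  · rw [fBeta, hden, div_le_one hdenpos]
    nlinarith

lemma abs_log_fBeta {β u : ℝ} (hβ : 0 ≤ β) (hu : u ∈ Set.Icc (0:ℝ) (1/2)) :
    |Real.log (fBeta β u)| ≤ 2*β := by
  obtain ⟨h1, h2⟩ := fBeta_bounds hβ hu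
  have hpos : 0 < fBeta β u := lt_of_lt_of_le (Real.exp_pos _) h1
  rw [abs_le]
  constructor
  · have := Real.log_le_log (Real.exp_pos _) h1
    rw [Real.log_exp] at this; linarith
  · have := Real.log_nonpos hpos.le h2
    linarith

lemma logf_contOn (β : ℝ) (hβ : 0 ≤ β) :
    ContinuousOn (fun u => Real.log (fBeta β u)) (Set.Icc (0:ℝ) (1/2)) := by
  have hf : ContinuousOn (fBeta β) (Set.Icc (0:ℝ) (1/2)) := by
    apply ContinuousOn.div
    · fun_prop
    · fun_prop
    · intro x hx
      have : x ≤ 1/2 := hx.2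
      exact ne_of_gt (by linarith : (0:ℝ) < 2*(1-x))
  exact hf.log (fun x hx => ne_of_gt (lt_of_lt_of_le (Real.exp_pos _) (fBeta_bounds hβ hx).1))

lemma FBeta_lip {β a b : ℝ} (hβ : 0 ≤ β) (ha : a ∈ Set.Icc (0:ℝ) 1) (hb : b ∈ Set.Icc (0:ℝ) 1) :
    |FBeta β a - FBeta β b| ≤ 2*β * |a - b| := by
  set a' := min a (1-a) with ha'
  set b' := min b (1-b) with hb'
  have ha'm : a' ∈ Set.Icc (0:ℝ) (1/2) := by
    constructor
    · exact le_min ha.1 (by linarith [ha.2])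
    · rcases le_total a (1/2) with h | h
      · exact le_trans (min_le_left _ _) h
      · exact le_trans (min_le_right _ _) (by linarith)
  have hb'm : b' ∈ Set.Icc (0:ℝ) (1/2) := by
    constructor
    · exact le_min hb.1 (by linarith [hb.2])
    · rcases le_total b (1/2) with h | h
      · exact le_trans (min_le_left _ _) h
      · exact le_trans (min_le_right _ _) (by linarith)
  have hdist : |a' - b'| ≤ |a - b| := by
    refine le_trans (abs_min_sub_min_le_max a (1-a) b (1-b)) ?_
    apply max_le le_rfl
    rw [show (1-a) - (1-b) = -(a-b) by ring, abs_neg]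
  have hcont := logf_contOn β hβ
  have hIa : IntervalIntegrable (fun u => Real.log (fBeta β u)) MeasureTheory.volume 0 a' :=
    (hcont.mono (Set.uIcc_subset_Icc ⟨le_refl _, by norm_num⟩ ha'm)).intervalIntegrable
  have hIb : IntervalIntegrable (fun u => Real.log (fBeta β u)) MeasureTheory.volume 0 b' :=
    (hcont.mono (Set.uIcc_subset_Icc ⟨le_refl _, by norm_num⟩ hb'm)).intervalIntegrable
  have heq : FBeta β a - FBeta β b = ∫ u in b'..a', Real.log (fBeta β u) :=
    intervalIntegral.integral_interval_sub_left hIa hIb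
  rw [heq]
  calc |∫ u in b'..a', Real.log (fBeta β u)| ≤ 2*β * |a' - b'| := by
        rw [← Real.norm_eq_abs]
        apply intervalIntegral.norm_integral_le_of_norm_le_const
        intro x hx
        have : x ∈ Set.Icc (0:ℝ) (1/2) :=
          Set.uIcc_subset_Icc hb'm ha'm (Set.uIoc_subset_uIcc hx)
        simpa using abs_log_fBeta hβ this
    _ ≤ 2*β * |a - b| := by
        apply mul_le_mul_of_nonneg_left hdist (by linarith)

/-- for `β ≥ 0`, `B ≥ 0` and `s, t ∈ [0,1]^ℕ`,
`|G_{β,B}(s) − G_{β,B}(t)| ≤ ∑_k p_k |I(s_k) − I(t_k)| + (2B + 2β) ∑_k k p_k |s_k − t_k|`. -/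
theorem Gfun_diff_bound (p : ℕ → ℝ) (hp : ∀ k, 0 ≤ p k) (hp0 : p 0 = 0)
    (hpsum : (∑' k, p k) = 1) (hmean : Summable fun k : ℕ => (k:ℝ) * p k)
    (β B : ℝ) (hβ : 0 ≤ β) (hB : 0 ≤ B)
    (s t : ℕ → ℝ) (hs : s ∈ unitCube) (ht : t ∈ unitCube) :
    |Gfun p β B s - Gfun p β B t| ≤
      (∑' k, p k * |entI (s k) - entI (t k)|)
        + (2*B + 2*β) * ∑' (k : ℕ), (k:ℝ) * p k * |s k - t k| := by
  -- basic facts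
  have hple : ∀ k : ℕ, p k ≤ (k:ℝ) * p k := by
    intro k
    cases k with
    | zero => simp [hp0]
    | succ n =>
        have h1 : (1:ℝ) ≤ (n+1:ℕ) := by exact_mod_cast Nat.one_le_iff_ne_zero.mpr (Nat.succ_ne_zero n)
        nlinarith [hp (n+1)]
  have hSp : Summable p := Summable.of_nonneg_of_le hp hple hmean
  have hE1 : (1:ℝ) ≤ meanD p := by
    rw [meanD, ← hpsum]; exact Summable.tsum_le_tsum hple hSp hmean
  have hE0 : (0:ℝ) < meanD p := by linarith
  -- bounds on s, t
  have hs0 : ∀ k, 0 ≤ s k := fun k => (hs k).1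
  have hs1 : ∀ k, s k ≤ 1 := fun k => (hs k).2
  have ht0 : ∀ k, 0 ≤ t k := fun k => (ht k).1
  have ht1 : ∀ k, t k ≤ 1 := fun k => (ht k).2
  -- summabilities
  have hSent : ∀ (u : ℕ → ℝ), (∀ k, 0 ≤ u k) → (∀ k, u k ≤ 1) →
      Summable (fun k => p k * entI (u k)) := by
    intro u h0 h1
    apply Summable.of_nonneg_of_le
        (fun k => mul_nonneg (hp k) (entI_mem (h0 k) (h1 k)).1)
        (fun k => by nlinarith [(entI_mem (h0 k) (h1 k)).2, hp k]) (hSp.mul_left 2)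
  have hSes := hSent s hs0 hs1
  have hSet := hSent t ht0 ht1
  have hSsp : ∀ (u : ℕ → ℝ), (∀ k, 0 ≤ u k) → (∀ k, u k ≤ 1) →
      Summable (fun k => u k * p k) := by
    intro u h0 h1
    exact Summable.of_nonneg_of_le (fun k => mul_nonneg (h0 k) (hp k))
      (fun k => by nlinarith [hp k, h0 k, h1 k]) hSp
  have hSss := hSsp s hs0 hs1
  have hSst := hSsp t ht0 ht1
  have hSm : ∀ (u : ℕ → ℝ), (∀ k, 0 ≤ u k) → (∀ k, u k ≤ 1) →
      Summable (fun k : ℕ => (k:ℝ) * p k * u k) := by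
    intro u h0 h1
    exact Summable.of_nonneg_of_le
      (fun k => mul_nonneg (mul_nonneg (Nat.cast_nonneg k) (hp k)) (h0 k))
      (fun k => by nlinarith [mul_nonneg (Nat.cast_nonneg (α := ℝ) k) (hp k), h0 k, h1 k]) hmean
  have hSms := hSm s hs0 hs1
  have hSmt := hSm t ht0 ht1
  have habs_le1 : ∀ k, |s k - t k| ≤ 1 := by
    intro k; rw [abs_le]; constructor <;> nlinarith [hs0 k, hs1 k, ht0 k, ht1 k]
  have hSabs : Summable (fun k : ℕ => (k:ℝ) * p k * |s k - t k|) :=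
    Summable.of_nonneg_of_le
      (fun k => mul_nonneg (mul_nonneg (Nat.cast_nonneg k) (hp k)) (abs_nonneg _))
      (fun k => by nlinarith [mul_nonneg (Nat.cast_nonneg (α := ℝ) k) (hp k), habs_le1 k, abs_nonneg (s k - t k)]) hmean
  have hSpabs : Summable (fun k => p k * |s k - t k|) :=
    Summable.of_nonneg_of_le (fun k => mul_nonneg (hp k) (abs_nonneg _))
      (fun k => by nlinarith [hp k, habs_le1 k, abs_nonneg (s k - t k)]) hSp
  have hSentabs : Summable (fun k => p k * |entI (s k) - entI (t k)|) := by
    apply Summable.of_nonneg_of_le (fun k => mul_nonneg (hp k) (abs_nonneg _))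
      (fun k => ?_) (hSp.mul_left 4)
    have h1 := entI_mem (hs0 k) (hs1 k)
    have h2 := entI_mem (ht0 k) (ht1 k)
    have : |entI (s k) - entI (t k)| ≤ 4 := by
      rw [abs_le]; constructor <;> nlinarith [h1.1, h1.2, h2.1, h2.2]
    nlinarith [hp k, abs_nonneg (entI (s k) - entI (t k))]
  -- key quantities
  set As := ∑' k, p k * entI (s k) with hAs
  set At := ∑' k, p k * entI (t k) with hAt
  set Ls := ∑' k, s k * p k with hLs
  set Lt := ∑' k, t k * p k with hLt
  set Ms := ∑' (k:ℕ), (k:ℝ) * p k * s k with hMs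
  set Mt := ∑' (k:ℕ), (k:ℝ) * p k * t k with hMt
  set X := ∑' (k:ℕ), (k:ℝ) * p k * |s k - t k| with hX
  -- x_s, x_t in [0,1]
  have hMmem : ∀ (u : ℕ → ℝ) (h0 : ∀ k, 0 ≤ u k) (h1 : ∀ k, u k ≤ 1),
      (∑' (k:ℕ), (k:ℝ) * p k * u k) / meanD p ∈ Set.Icc (0:ℝ) 1 := by
    intro u h0 h1
    constructor
    · apply div_nonneg _ hE0.le
      exact tsum_nonneg (fun k => mul_nonneg (mul_nonneg (Nat.cast_nonneg k) (hp k)) (h0 k))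
    · rw [div_le_one hE0]
      exact Summable.tsum_le_tsum (fun k => by nlinarith [mul_nonneg (Nat.cast_nonneg (α := ℝ) k) (hp k), h0 k, h1 k]) (hSm u h0 h1) hmean
  -- term 1
  have hT1 : |As - At| ≤ ∑' k, p k * |entI (s k) - entI (t k)| := by
    rw [hAs, hAt, ← Summable.tsum_sub hSes hSet]
    have : ∀ k, p k * entI (s k) - p k * entI (t k) = p k * (entI (s k) - entI (t k)) := by
      intro k; ring
    simp_rw [this]
    calc |∑' k, p k * (entI (s k) - entI (t k))| ≤ ∑' k, ‖p k * (entI (s k) - entI (t k))‖ := by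
          rw [← Real.norm_eq_abs]
          apply norm_tsum_le_tsum_norm
          simpa [Real.norm_eq_abs, abs_mul, abs_of_nonneg (hp _)] using hSentabs
      _ = ∑' k, p k * |entI (s k) - entI (t k)| := by
          simp [Real.norm_eq_abs, abs_mul, abs_of_nonneg (hp _)]
  -- term 2
  have hT2 : |Ls - Lt| ≤ X := by
    rw [hLs, hLt, ← Summable.tsum_sub hSss hSst]
    have : ∀ k, s k * p k - t k * p k = (s k - t k) * p k := fun k => by ring
    simp_rw [this]
    calc |∑' k, (s k - t k) * p k| ≤ ∑' k, ‖(s k - t k) * p k‖ := by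
          rw [← Real.norm_eq_abs]
          apply norm_tsum_le_tsum_norm
          simpa [Real.norm_eq_abs, abs_mul, abs_of_nonneg (hp _), mul_comm] using hSpabs
      _ = ∑' k, p k * |s k - t k| := by
          simp [Real.norm_eq_abs, abs_mul, abs_of_nonneg (hp _), mul_comm]
      _ ≤ X := Summable.tsum_le_tsum (fun k => by nlinarith [hple k, abs_nonneg (s k - t k), hp k, habs_le1 k, mul_le_mul_of_nonneg_right (hple k) (abs_nonneg (s k - t k))]) hSpabs hSabs
  -- term 3
  have hT3 : |Ms - Mt| ≤ X := by
    rw [hMs, hMt, ← Summable.tsum_sub hSms hSmt]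
    have : ∀ k : ℕ, (k:ℝ) * p k * s k - (k:ℝ) * p k * t k = (k:ℝ) * p k * (s k - t k) := fun k => by ring
    simp_rw [this]
    calc |∑' k : ℕ, (k:ℝ) * p k * (s k - t k)| ≤ ∑' k : ℕ, ‖(k:ℝ) * p k * (s k - t k)‖ := by
          rw [← Real.norm_eq_abs]
          apply norm_tsum_le_tsum_norm
          simpa [Real.norm_eq_abs, abs_mul, abs_of_nonneg (hp _), abs_of_nonneg (Nat.cast_nonneg (α := ℝ) _)] using hSabs
      _ = X := by
          rw [hX]
          simp [Real.norm_eq_abs, abs_mul, abs_of_nonneg (hp _), abs_of_nonneg (Nat.cast_nonneg (α := ℝ) _)]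
  have hF : meanD p * |FBeta β (Ms / meanD p) - FBeta β (Mt / meanD p)| ≤ 2*β * X := by
    calc meanD p * |FBeta β (Ms / meanD p) - FBeta β (Mt / meanD p)|
        ≤ meanD p * (2*β * |Ms / meanD p - Mt / meanD p|) := by
          apply mul_le_mul_of_nonneg_left _ hE0.le
          exact FBeta_lip hβ (hMmem s hs0 hs1) (hMmem t ht0 ht1)
      _ = 2*β * |Ms - Mt| := by
          rw [div_sub_div_same, abs_div, abs_of_pos hE0]
          field_simp
      _ ≤ 2*β * X := by nlinarith
  -- combine
  have hGdiff : Gfun p β B s - Gfun p β B t =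
      (As - At) + (2*B*(Ls - Lt) + meanD p * (FBeta β (Ms / meanD p) - FBeta β (Mt / meanD p))) := by
    rw [Gfun, Gfun, ← hAs, ← hAt, ← hLs, ← hLt, ← hMs, ← hMt]; ring
  rw [hGdiff]
  have habs2 : |2*B*(Ls - Lt)| = 2*B*|Ls - Lt| := by
    rw [abs_mul, abs_of_nonneg (by linarith : (0:ℝ) ≤ 2*B)]
  have habs3 : |meanD p * (FBeta β (Ms / meanD p) - FBeta β (Mt / meanD p))| =
      meanD p * |FBeta β (Ms / meanD p) - FBeta β (Mt / meanD p)| := by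
    rw [abs_mul, abs_of_pos hE0]
  have hX0 : 0 ≤ X :=
    tsum_nonneg (fun k => mul_nonneg (mul_nonneg (Nat.cast_nonneg k) (hp k)) (abs_nonneg _))
  calc |(As - At) + (2*B*(Ls - Lt) + meanD p * (FBeta β (Ms / meanD p) - FBeta β (Mt / meanD p)))|
      ≤ |As - At| + (|2*B*(Ls - Lt)| + |meanD p * (FBeta β (Ms / meanD p) - FBeta β (Mt / meanD p))|) :=
        le_trans (abs_add_le _ _) (by gcongr; exact abs_add_le _ _)
    _ ≤ (∑' k, p k * |entI (s k) - entI (t k)|) + (2*B + 2*β) * X := by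
        rw [habs2, habs3]
        nlinarith [hT1, hT2, hT3, hF, hX0, mul_le_mul_of_nonneg_left hT2 (by linarith : (0:ℝ) ≤ 2*B)]
end
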